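/- There exists a 2×2 integer matrix M that is ∩-symmetric (i.e. M − Mᵀ = J where J = !![0, 1; -1, 0]) such that for every matrix P in GL(2,ℤ) and every ε ∈ {1, −1}, Pᵀ * M * P ≠ !![0, ε; 0, 0]. (This is the algebraic content of Theorem 2(b): there are ∩-symmetric bilinear forms on H₁ of the torus that are not realizable as the Seifert form of any embedding of the torus into ℝ³, since by Theorem 2(a) every realizable form equals ((x₁,y₁),(x₂,y₂)) ↦ ±x₁y₂ in some basis.) -/
import Mathlib


open Matrix

/-- The matrix of the intersection form of the torus on `H₁ ≅ ℤ²`. -/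
def Jmat : Matrix (Fin 2) (Fin 2) ℤ := !![0, 1; -1, 0]

/-- There is a ∩-symmetric 2×2 integer matrix `M` (i.e. `M - Mᵀ = J`) which is not
`GL(2,ℤ)`-congruent to `!![0, ε; 0, 0]` for either `ε = 1` or `ε = -1`; i.e. there are
∩-symmetric bilinear forms on `H₁` of the torus not realizable as Seifert forms of
embeddings of the torus into ℝ³. -/
theorem exists_cap_symmetric_not_congruent_standard :
    ∃ M : Matrix (Fin 2) (Fin 2) ℤ, M - Mᵀ = Jmat ∧
      ∀ P : GL (Fin 2) ℤ, ∀ ε : ℤ, (ε = 1 ∨ ε = -1) →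
        (P : Matrix (Fin 2) (Fin 2) ℤ)ᵀ * M * (P : Matrix (Fin 2) (Fin 2) ℤ) ≠
          !![0, ε; 0, 0] := by
  refine ⟨!![1, 1; 0, 1], by decide, ?_⟩
  intro P ε hε h
  set M : Matrix (Fin 2) (Fin 2) ℤ := !![1, 1; 0, 1] with hM
  set Q : Matrix (Fin 2) (Fin 2) ℤ := (P : Matrix (Fin 2) (Fin 2) ℤ) with hQ
  have h2 : Qᵀ * (M + Mᵀ) * Q = !![0, ε; 0, 0] + !![0, ε; 0, 0]ᵀ := by
    have h' : (Qᵀ * M * Q)ᵀ = !![0, ε; 0, 0]ᵀ := congrArg Matrix.transpose h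
    rw [Matrix.mul_add, Matrix.add_mul, h, ← h']
    rw [Matrix.transpose_mul, Matrix.transpose_mul, Matrix.transpose_transpose,
      Matrix.mul_assoc]
  have hdet := congrArg Matrix.det h2
  have hMdet : (M + Mᵀ).det = 3 := by decide
  rw [Matrix.det_mul, Matrix.det_mul, Matrix.det_transpose, hMdet] at hdet
  have hsum : !![0, ε; 0, 0] + !![0, ε; 0, 0]ᵀ = !![0, ε; ε, 0] := by
    ext i j; fin_cases i <;> fin_cases j <;> simp [Matrix.transpose, Matrix.vecHead, Matrix.vecTail]
  have hrhs : (!![0, ε; 0, 0] + !![0, ε; 0, 0]ᵀ).det = -(ε * ε) := by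
    rw [hsum, Matrix.det_fin_two_of]; ring
  rw [hrhs] at hdet
  have hε2 : ε * ε = 1 := by rcases hε with rfl | rfl <;> norm_num
  nlinarith [sq_nonneg Q.det]
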